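/- Let k be an algebraically closed field of characteristic p. The number of elements λ ∈ k with λ ≠ 0, λ ≠ 1 and Φ_a(λ) = 0 (the a-supersingular λ-values) equals min(α·(m−a4), α·a3) − max(α(a2+a3−m), 0) − max(α(a1+a3−m), 0), and this number is strictly positive. -/

import Mathlib

open Polynomial Finset

/-- The `a`-Hasse invariant `Φ_a ∈ 𝔽_p[λ]` of a type `a = (a1, a2, a3, a4)` in the mixed case:
`Φ_a(λ) = (-1)^(α a3) ∑_{i+j = α a3} C(α a2*, i) C(α a4*, j) λ^j` where `α = (p-1)/m` and
`a_i* = m - a_i`. -/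
noncomputable def HasseInv (p m a2 a3 a4 : ℕ) : Polynomial (ZMod p) :=
  let α := (p - 1) / m
  C ((-1 : ZMod p) ^ (α * a3)) *
    ∑ j ∈ Finset.range (α * a3 + 1),
      C ((Nat.choose (α * (m - a2)) (α * a3 - j) * Nat.choose (α * (m - a4)) j : ℕ) : ZMod p) *
        X ^ j

section Aux
variable {p : ℕ} [Fact p.Prime] {k : Type*} [Field k] [CharP k p]

lemma cast_choose_ne_zero {y x : ℕ} (hy : y < p) (hx : x ≤ y) :
    ((y.choose x : ℕ) : k) ≠ 0 := by
  have hp := (Fact.out : p.Prime)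
  rw [Ne, CharP.cast_eq_zero_iff k p]
  intro hdvd
  have h1 : y.choose x * Nat.factorial x * Nat.factorial (y - x) = Nat.factorial y :=
    Nat.choose_mul_factorial_mul_factorial hx
  have h2 : p ∣ Nat.factorial y := h1 ▸ (hdvd.mul_right _).mul_right _
  have := (Nat.Prime.dvd_factorial hp).mp h2
  omega

lemma cast_p_add_choose {r s : ℕ} (hs : s < p) :
    (((p + r).choose s : ℕ) : k) = ((r.choose s : ℕ) : k) := by
  have hp := (Fact.out : p.Prime)
  rw [Nat.add_choose_eq]
  push_cast
  rw [Finset.sum_eq_single ((0 : ℕ), s)]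
  · simp
  · rintro ⟨i, j⟩ hij hne
    rw [Finset.HasAntidiagonal.mem_antidiagonal] at hij
    have hi : i ≠ 0 := by rintro rfl; simp at hij; exact hne (by simp [hij])
    have hd : p ∣ p.choose i := hp.dvd_choose_self hi (by omega)
    have : ((p.choose i : ℕ) : k) = 0 := (CharP.cast_eq_zero_iff k p _).mpr hd
    simp [this]
  · intro h
    simp [Finset.mem_antidiagonal] at h
end Aux

section Gen
variable {k : Type*} [Field k]

/-- The normalized Hasse-type polynomial. -/
noncomputable def Fk (k : Type*) [Field k] (A B n : ℕ) : k[X] :=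
  ∑ j ∈ Finset.range (n + 1), C ((A.choose (n - j) * B.choose j : ℕ) : k) * X ^ j

lemma Fk_coeff (A B n j : ℕ) :
    (Fk k A B n).coeff j = if j ≤ n then ((A.choose (n - j) * B.choose j : ℕ) : k) else 0 := by
  rw [Fk, finset_sum_coeff]
  simp only [coeff_C_mul, coeff_X_pow, mul_ite, mul_one, mul_zero]
  rw [Finset.sum_ite_eq (Finset.range (n + 1)) j]
  simp [Nat.lt_succ_iff]
lemma Fk_rec (A B n : ℕ) (j : ℕ) :
    ((j : k) + 1) * ((A : k) - n + 1 + j) * (Fk k A B n).coeff (j + 1)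
      = ((n : k) - j) * ((B : k) - j) * (Fk k A B n).coeff j := by
  rcases le_or_gt n j with hnj | hjn
  · rw [Fk_coeff, Fk_coeff, if_neg (by omega)]
    rcases eq_or_lt_of_le hnj with heq | h
    · rw [← heq]
      simp [sub_self]
    · rw [if_neg (by omega)]
      simp
  · rw [Fk_coeff, Fk_coeff, if_pos (by omega), if_pos (by omega)]
    rcases le_or_gt B j with hBj | hjB
    · rcases eq_or_lt_of_le hBj with heq | h
      · rw [Nat.choose_eq_zero_of_lt (by omega : B < j + 1), heq]
        simp [sub_self]
      · rw [Nat.choose_eq_zero_of_lt (by omega : B < j + 1),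
          Nat.choose_eq_zero_of_lt (by omega : B < j)]
        simp
    · rcases le_or_gt (n - j - 1) A with hsA | hsA
      · have h1 := Nat.choose_succ_right_eq B j
        have h2 := Nat.choose_succ_right_eq A (n - j - 1)
        rw [(by omega : n - j - 1 + 1 = n - j)] at h2
        have keyN : (j + 1) * ((A - (n - j - 1)) * (A.choose (n - j - 1) * B.choose (j + 1)))
            = (n - j) * ((B - j) * (A.choose (n - j) * B.choose j)) := by
          calc (j + 1) * ((A - (n - j - 1)) * (A.choose (n - j - 1) * B.choose (j + 1)))
              = (A.choose (n - j - 1) * (A - (n - j - 1))) * (B.choose (j + 1) * (j + 1)) := by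
                ring
            _ = (A.choose (n - j) * (n - j)) * (B.choose j * (B - j)) := by rw [h2, h1]
            _ = (n - j) * ((B - j) * (A.choose (n - j) * B.choose j)) := by ring
        have keyK := congrArg (Nat.cast : ℕ → k) keyN
        push_cast at keyK
        rw [Nat.cast_sub hsA, Nat.cast_sub (by omega : j ≤ B),
          Nat.cast_sub (by omega : j ≤ n)] at keyK
        have e1 : ((n - j - 1 : ℕ) : k) = (n : k) - (j : k) - 1 := by
          rw [(by omega : n - j - 1 = n - (j + 1)), Nat.cast_sub (by omega : j + 1 ≤ n)]
          push_cast
          ring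
        rw [e1] at keyK
        rw [(by omega : n - (j + 1) = n - j - 1)]
        push_cast
        linear_combination keyK
      · rw [(by omega : n - (j + 1) = n - j - 1), Nat.choose_eq_zero_of_lt hsA,
          Nat.choose_eq_zero_of_lt (by omega : A < n - j)]
        simp

end Gen

section MultHelper
variable {k : Type*} [Field k]

lemma rootMult_eq_of_taylor {F : k[X]} {r : k} {t : ℕ}
    (h0 : ∀ i, i < t → (taylor r F).coeff i = 0) (ht : (taylor r F).coeff t ≠ 0) :
    rootMultiplicity r F = t := by
  have hF : F ≠ 0 := by rintro rfl; simp at ht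
  have hdvd : (X - C r) ^ t ∣ F := by
    obtain ⟨g, hg⟩ := (X_pow_dvd_iff).mpr h0
    have h2 := congrArg (taylor (-r)) hg
    rw [taylor_taylor, neg_add_cancel, taylor_zero] at h2
    rw [h2, taylor_apply, mul_comp, pow_comp, X_comp, C_neg, ← sub_eq_add_neg]
    exact dvd_mul_right _ _
  have hnd : ¬ (X - C r) ^ (t + 1) ∣ F := by
    rintro ⟨g, hg⟩
    have h2 := congrArg (taylor r) hg
    rw [taylor_mul] at h2
    have h3 : taylor r ((X - C r) ^ (t + 1)) = X ^ (t + 1) := by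
      rw [taylor_apply, pow_comp, sub_comp, X_comp, C_comp]
      ring_nf
    rw [h3] at h2
    apply ht
    rw [h2, coeff_X_pow_mul']
    simp
  have hle := (rootMultiplicity_le_iff hF r t).mpr hnd
  have hge := (le_rootMultiplicity_iff hF).mpr hdvd
  omega
end MultHelper

lemma choose_mul_aux {B i j : ℕ} (hiB : i ≤ B) :
    B.choose (i + j) * (i + j).choose i = B.choose i * (B - i).choose j := by
  rcases le_or_gt (i + j) B with h | h
  · have := Nat.choose_mul (n := B) (Nat.le_add_right i j)
    simpa [Nat.add_sub_cancel_left] using this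
  · rw [Nat.choose_eq_zero_of_lt h, Nat.choose_eq_zero_of_lt (by omega : B - i < j),
      zero_mul, mul_zero]

lemma sum_choose_eq (A B n i : ℕ) (hiB : i ≤ B) (hin : i ≤ n) :
    ∑ j ∈ Finset.range (n + 1), A.choose (n - j) * B.choose j * j.choose i
      = B.choose i * (A + (B - i)).choose (n - i) := by
  have h1 : ∑ j ∈ Finset.range (n + 1), A.choose (n - j) * B.choose j * j.choose i
      = ∑ j ∈ Finset.Ico i (n + 1), A.choose (n - j) * B.choose j * j.choose i := by
    refine (Finset.sum_subset (by intro x hx; simp at hx ⊢; omega) ?_).symm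
    intro x hx hnx
    simp only [Finset.mem_range] at hx
    simp only [Finset.mem_Ico] at hnx
    rw [Nat.choose_eq_zero_of_lt (show x < i by omega), mul_zero]
  rw [h1, Finset.sum_Ico_eq_sum_range]
  have h2 : ∀ j' ∈ Finset.range (n + 1 - i),
      A.choose (n - (i + j')) * B.choose (i + j') * (i + j').choose i
        = B.choose i * (A.choose ((n - i) - j') * (B - i).choose j') := by
    intro j' _
    rw [mul_assoc, choose_mul_aux hiB, (by omega : n - (i + j') = n - i - j')]
    ring
  rw [Finset.sum_congr rfl h2, ← Finset.mul_sum]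
  congr 1
  rw [Nat.add_choose_eq, Finset.Nat.sum_antidiagonal_eq_sum_range_succ_mk,
    (by omega : n + 1 - i = (n - i) + 1)]
  rw [← Finset.sum_range_reflect]
  refine Finset.sum_congr rfl fun j hj => ?_
  simp only [Finset.mem_range] at hj
  rw [(by omega : n - i - (n - i + 1 - 1 - j) = j), (by omega : n - i + 1 - 1 - j = n - i - j)]

section CharSec
variable {p : ℕ} [Fact p.Prime] {k : Type*} [Field k] [CharP k p] {A B n : ℕ}

lemma Fk_coeff_ne_zero (hA : A < p) (hB : B < p) {j : ℕ} (hj : j ≤ n)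
    (h1 : n - j ≤ A) (h2 : j ≤ B) : (Fk k A B n).coeff j ≠ 0 := by
  rw [Fk_coeff, if_pos hj, Nat.cast_mul]
  exact mul_ne_zero (cast_choose_ne_zero hA h1) (cast_choose_ne_zero hB h2)

lemma Fk_ne_zero (hA : A < p) (hB : B < p) (hnAB : n ≤ A + B) : Fk k A B n ≠ 0 := by
  intro h
  exact Fk_coeff_ne_zero hA hB (Nat.min_le_right B n) (by omega) (Nat.min_le_left B n)
    (h ▸ coeff_zero (min B n))

lemma natDegree_Fk (hA : A < p) (hB : B < p) (hnAB : n ≤ A + B) :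
    (Fk k A B n).natDegree = min B n := by
  refine le_antisymm ?_ (le_natDegree_of_ne_zero
    (Fk_coeff_ne_zero hA hB (Nat.min_le_right B n) (by omega) (Nat.min_le_left B n)))
  rw [natDegree_le_iff_coeff_eq_zero]
  intro N hN
  rw [Fk_coeff]
  rcases le_or_gt N n with h | h
  · rw [if_pos h, Nat.choose_eq_zero_of_lt (show B < N by omega), mul_zero, Nat.cast_zero]
  · rw [if_neg (by omega)]

lemma rootMult_zero_Fk (hA : A < p) (hB : B < p) (h0B : n - A ≤ B) :
    rootMultiplicity (0 : k) (Fk k A B n) = n - A := by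
  apply rootMult_eq_of_taylor <;> rw [taylor_zero]
  · intro i hi
    rw [Fk_coeff, if_pos (by omega), Nat.choose_eq_zero_of_lt (show A < n - i by omega),
      zero_mul, Nat.cast_zero]
  · exact Fk_coeff_ne_zero hA hB (by omega) (by omega) h0B

lemma taylor_one_coeff_Fk (A B n i : ℕ) :
    (taylor (1 : k) (Fk k A B n)).coeff i
      = ((∑ j ∈ Finset.range (n + 1), A.choose (n - j) * B.choose j * j.choose i : ℕ) : k) := by
  rw [taylor_coeff, Fk, map_sum, eval_finset_sum]
  push_cast
  refine Finset.sum_congr rfl fun j hj => ?_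
  rw [C_mul_X_pow_eq_monomial, hasseDeriv_monomial, eval_monomial, one_pow, mul_one]
  push_cast
  ring

lemma rootMult_one_Fk (hA : A < p) (hB : B < p) (hn : n < p) (hnAB : n ≤ A + B)
    (htB : A + B + 1 - p ≤ B) (htn : A + B + 1 - p ≤ n) :
    rootMultiplicity (1 : k) (Fk k A B n) = A + B + 1 - p := by
  apply rootMult_eq_of_taylor
  · intro i hi
    rw [taylor_one_coeff_Fk, sum_choose_eq A B n i (by omega) (by omega), Nat.cast_mul,
      (by omega : A + (B - i) = p + (A + B + 1 - p - 1 - i)),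
      cast_p_add_choose (by omega : n - i < p),
      Nat.choose_eq_zero_of_lt (by omega : A + B + 1 - p - 1 - i < n - i), Nat.cast_zero,
      mul_zero]
  · rw [taylor_one_coeff_Fk, sum_choose_eq A B n _ htB htn, Nat.cast_mul]
    exact mul_ne_zero (cast_choose_ne_zero hB htB)
      (cast_choose_ne_zero (show A + (B - (A + B + 1 - p)) < p by omega)
        (show n - (A + B + 1 - p) ≤ A + (B - (A + B + 1 - p)) by omega))

end CharSec

section ODE
variable {k : Type*} [Field k]

lemma Fk_ODE (A B n : ℕ) :
    derivative (derivative (Fk k A B n)) * X ^ 1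
      - derivative (derivative (Fk k A B n)) * X ^ 2
      + C ((A : k) - n + 1) * derivative (Fk k A B n)
      + C ((n : k) + B - 1) * derivative (Fk k A B n) * X ^ 1
      - C ((n : k) * B) * Fk k A B n = 0 := by
  ext j
  have R := Fk_rec (k := k) A B n
  rcases j with _ | _ | i
  · simp only [coeff_add, coeff_sub, coeff_zero, coeff_mul_X_pow', coeff_C_mul,
      coeff_derivative]
    norm_num
    have := R 0
    push_cast at this ⊢
    linear_combination this
  · simp only [coeff_add, coeff_sub, coeff_zero, coeff_mul_X_pow', coeff_C_mul,
      coeff_derivative]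
    norm_num
    have := R 1
    push_cast at this ⊢
    linear_combination this
  · simp only [coeff_add, coeff_sub, coeff_zero, coeff_mul_X_pow', coeff_C_mul,
      coeff_derivative, if_pos (by omega : 1 ≤ i + 2), if_pos (by omega : 2 ≤ i + 2),
      (by omega : i + 2 - 1 = i + 1), (by omega : i + 2 - 2 = i)]
    have := R (i + 2)
    push_cast at this ⊢
    linear_combination this

lemma ODE_family (A B n : ℕ) (i : ℕ) :
    ∃ a b c : k,
      derivative (derivative (derivative^[i] (Fk k A B n))) * X ^ 1
        - derivative (derivative (derivative^[i] (Fk k A B n))) * X ^ 2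
        + C a * derivative (derivative^[i] (Fk k A B n))
        + C b * derivative (derivative^[i] (Fk k A B n)) * X ^ 1
        - C c * derivative^[i] (Fk k A B n) = 0 := by
  induction i with
  | zero =>
    exact ⟨(A : k) - n + 1, (n : k) + B - 1, (n : k) * B, by
      simpa only [Function.iterate_zero_apply] using Fk_ODE A B n⟩
  | succ i ih =>
    obtain ⟨a, b, c, h⟩ := ih
    refine ⟨a + 1, b - 2, c - b, ?_⟩
    have hd := congrArg derivative h
    simp only [derivative_add, derivative_sub, derivative_mul, derivative_C, derivative_X,
      derivative_X_pow, derivative_zero, Function.iterate_succ_apply'] at hd ⊢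
    have hC2 : (C (2 : k)) = 2 := by
      rw [(by norm_num : (2 : k) = 1 + 1), map_add, C_1]
      norm_num
    simp only [Nat.cast_one, Nat.cast_ofNat, map_add, map_sub, map_one, map_mul, C_1, hC2,
      pow_zero, pow_one, mul_one, zero_mul, one_mul] at hd ⊢
    linear_combination hd

lemma natDegree_Fk_le (A B n : ℕ) : (Fk k A B n).natDegree ≤ n := by
  rw [natDegree_le_iff_coeff_eq_zero]
  intro N hN
  rw [Fk_coeff, if_neg (by omega)]

lemma Fk_sep {p : ℕ} [Fact p.Prime] [CharP k p] {A B n : ℕ} (hn : n < p)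
    (hF : Fk k A B n ≠ 0) (x : k) (hx0 : x ≠ 0) (hx1 : x ≠ 1) :
    rootMultiplicity x (Fk k A B n) ≤ 1 := by
  set F := Fk k A B n with hFdef
  by_contra hle
  push_neg at hle
  have h2 : (X - C x) ^ 2 ∣ F := (le_rootMultiplicity_iff hF).mp (by omega)
  obtain ⟨g, hg⟩ := h2
  have hev0 : F.eval x = 0 := by rw [hg]; simp
  have hev1 : (derivative F).eval x = 0 := by
    rw [hg, derivative_mul, derivative_pow]
    simp
  have hxx : x - x ^ 2 ≠ 0 := by
    have h1 : (1 : k) - x ≠ 0 := sub_ne_zero.mpr (Ne.symm hx1)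
    have := mul_ne_zero hx0 h1
    intro hc
    apply this
    rw [← hc]
    ring
  have vanish : ∀ i, (derivative^[i] F).eval x = 0 ∧ (derivative^[i + 1] F).eval x = 0 := by
    intro i
    induction i with
    | zero => exact ⟨hev0, by simpa using hev1⟩
    | succ i ih =>
      refine ⟨ih.2, ?_⟩
      obtain ⟨a, b, c, h⟩ := ODE_family (k := k) A B n i
      have he := congrArg (eval x) h
      simp only [eval_add, eval_sub, eval_mul, eval_pow, eval_C, eval_X, eval_zero] at he
      have e0 := ih.1
      have e1 := ih.2
      simp only [Function.iterate_succ_apply'] at e1 ⊢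
      rw [← hFdef] at he
      rw [e0, e1] at he
      have hE2 : (derivative (derivative (derivative^[i] F))).eval x * (x - x ^ 2) = 0 := by
        linear_combination he
      rcases mul_eq_zero.mp hE2 with h' | h'
      · exact h'
      · exact absurd h' hxx
  have hdeg : (taylor x F).natDegree ≤ n := by
    rw [natDegree_taylor]
    exact natDegree_Fk_le A B n
  have hasse0 : taylor x F = 0 := by
    ext i
    rcases le_or_gt i n with h | h
    · have h1 : (derivative^[i] F).eval x = 0 := (vanish i).1
      rw [← factorial_smul_hasseDeriv] at h1
      simp only [LinearMap.smul_apply] at h1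
      rw [nsmul_eq_mul, eval_mul, eval_natCast] at h1
      have hfac : ((Nat.factorial i : ℕ) : k) ≠ 0 := by
        rw [Ne, CharP.cast_eq_zero_iff k p]
        intro hd
        have := (Nat.Prime.dvd_factorial (Fact.out : p.Prime)).mp hd
        omega
      rw [taylor_coeff, coeff_zero]
      rcases mul_eq_zero.mp h1 with h' | h'
      · exact absurd h' hfac
      · exact h'
    · rw [coeff_eq_zero_of_natDegree_lt (by omega), coeff_zero]
  exact hF (by simpa using taylor_injective x (by simpa using hasse0))

lemma Fk_count {p : ℕ} [Fact p.Prime] [CharP k p] [IsAlgClosed k] {A B n : ℕ}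
    (hA : A < p) (hB : B < p) (hn : n < p) (hnAB : n ≤ A + B)
    (htB : A + B + 1 - p ≤ B) (htn : A + B + 1 - p ≤ n)
    (hdeg : (Fk k A B n).natDegree = min B n)
    (hF : Fk k A B n ≠ 0)
    (hm0 : rootMultiplicity (0 : k) (Fk k A B n) = n - A)
    (hm1 : rootMultiplicity (1 : k) (Fk k A B n) = A + B + 1 - p) :
    ({x : k | x ≠ 0 ∧ x ≠ 1 ∧ (Fk k A B n).IsRoot x}).ncard
      + (n - A) + (A + B + 1 - p) = min B n := by
  classical
  set F := Fk k A B n with hFdef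
  have hsp : Splits F := IsAlgClosed.splits F
  have hcard : F.roots.card = min B n := by
    rw [← hdeg]
    exact (splits_iff_card_roots.mp hsp).symm ▸ rfl
  set T := F.roots.toFinset with hT
  have hset : {x : k | x ≠ 0 ∧ x ≠ 1 ∧ F.IsRoot x} = ↑(T \ ({0, 1} : Finset k)) := by
    ext x
    simp only [Set.mem_setOf_eq, Finset.coe_sdiff, Set.mem_diff, Finset.mem_coe,
      Finset.mem_sdiff, Multiset.mem_toFinset, mem_roots hF, Finset.mem_insert,
      Finset.mem_singleton, hT]
    tauto
  rw [hset, Set.ncard_coe_finset]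
  have hsum : ∑ a ∈ T, F.roots.count a = min B n := by
    rw [Multiset.toFinset_sum_count_eq]
    exact hcard
  have hinter : ({0, 1} : Finset k) ∩ T ⊆ T := Finset.inter_subset_right
  have hsd : T \ (({0, 1} : Finset k) ∩ T) = T \ ({0, 1} : Finset k) := by
    ext x; simp only [Finset.mem_sdiff, Finset.mem_inter]; tauto
  have hsplit := Finset.sum_sdiff (f := fun a => F.roots.count a) hinter
  rw [hsd] at hsplit
  have h01 : ∑ a ∈ ({0, 1} : Finset k) ∩ T, F.roots.count a
      = ∑ a ∈ ({0, 1} : Finset k), F.roots.count a := by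
    refine Finset.sum_subset Finset.inter_subset_left ?_
    intro x hx hnx
    rw [Multiset.count_eq_zero]
    intro hmem
    exact hnx (Finset.mem_inter.mpr ⟨hx, Multiset.mem_toFinset.mpr hmem⟩)
  have hpair : ∑ a ∈ ({0, 1} : Finset k), F.roots.count a
      = (n - A) + (A + B + 1 - p) := by
    rw [Finset.sum_pair (zero_ne_one)]
    rw [count_roots, count_roots, hm0, hm1]
  have hones : ∑ a ∈ T \ ({0, 1} : Finset k), F.roots.count a
      = (T \ ({0, 1} : Finset k)).card := by
    rw [Finset.card_eq_sum_ones]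
    refine Finset.sum_congr rfl ?_
    intro x hx
    simp only [hT, Finset.mem_sdiff, Multiset.mem_toFinset, mem_roots hF, Finset.mem_insert,
      Finset.mem_singleton, not_or] at hx
    obtain ⟨hxr, hx0, hx1⟩ := hx
    rw [count_roots]
    have hroot : F.IsRoot x := hxr
    have hge : 1 ≤ rootMultiplicity x F := (rootMultiplicity_pos hF).mpr hroot
    have hle := Fk_sep hn hF x hx0 hx1
    rw [← hFdef] at hle
    omega
  rw [hones, h01, hpair] at hsplit
  rw [← hsum, ← hsplit]
  ring

end ODE

/-- over an algebraically closed field `k` of characteristic `p`, the number of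
`a`-supersingular values (roots of `Φ_a` in `k ∖ {0, 1}`) is
`min(α(m-a4), α a3) - max(α(a2+a3-m), 0) - max(α(a1+a3-m), 0)`, and it is positive. -/
theorem stmt9 (p m a1 a2 a3 a4 : ℕ) (hp : p.Prime) [Fact p.Prime] (hp2 : 2 < p)
    (hm1 : 1 < m) (hmd : m ∣ p - 1)
    (h1 : 0 < a1 ∧ a1 < m) (h2 : 0 < a2 ∧ a2 < m) (h3 : 0 < a3 ∧ a3 < m)
    (h4 : 0 < a4 ∧ a4 < m) (hsum : a1 + a2 + a3 + a4 = 2 * m)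
    (k : Type*) [Field k] [IsAlgClosed k] [CharP k p] :
    ((({lam : k | lam ≠ 0 ∧ lam ≠ 1 ∧
        ((HasseInv p m a2 a3 a4).map (ZMod.castHom dvd_rfl k)).IsRoot lam}).ncard : ℤ) =
      min ((((p - 1) / m : ℕ) : ℤ) * ((m : ℤ) - (a4 : ℤ))) ((((p - 1) / m : ℕ) : ℤ) * (a3 : ℤ))
        - max ((((p - 1) / m : ℕ) : ℤ) * ((a2 : ℤ) + (a3 : ℤ) - (m : ℤ))) 0
        - max ((((p - 1) / m : ℕ) : ℤ) * ((a1 : ℤ) + (a3 : ℤ) - (m : ℤ))) 0) ∧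
    0 < ({lam : k | lam ≠ 0 ∧ lam ≠ 1 ∧
        ((HasseInv p m a2 a3 a4).map (ZMod.castHom dvd_rfl k)).IsRoot lam}).ncard := by
  obtain ⟨h1a, h1b⟩ := h1
  obtain ⟨h2a, h2b⟩ := h2
  obtain ⟨h3a, h3b⟩ := h3
  obtain ⟨h4a, h4b⟩ := h4
  set α := (p - 1) / m with hαdef
  -- basic product identities
  have hαm : α * m = p - 1 := Nat.div_mul_cancel hmd
  have hα1 : 1 ≤ α := by
    rw [hαdef, Nat.le_div_iff_mul_le (by omega)]
    have := Nat.le_of_dvd (by omega) hmd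
    omega
  have hxlow : ∀ a : ℕ, 1 ≤ a → α ≤ α * a := fun a ha =>
    le_mul_of_le_of_one_le (le_refl α) ha
  have hxhigh : ∀ a : ℕ, a < m → α * a + α ≤ α * m := by
    intro a ha
    have h' : α * (a + 1) ≤ α * m := Nat.mul_le_mul_left α (by omega)
    rw [Nat.mul_add, mul_one] at h'
    exact h'
  have P1 : α * (m - a2) + α * a2 = α * m := by
    rw [← Nat.mul_add, Nat.sub_add_cancel (le_of_lt h2b)]
  have P2 : α * (m - a4) + α * a4 = α * m := by
    rw [← Nat.mul_add, Nat.sub_add_cancel (le_of_lt h4b)]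
  have P3 : α * a1 + α * a2 + α * a3 + α * a4 = 2 * (α * m) := by
    have : α * (a1 + a2 + a3 + a4) = α * (2 * m) := by rw [hsum]
    rw [Nat.mul_add, Nat.mul_add, Nat.mul_add] at this
    rw [this]
    ring
  have hx1l := hxlow a1 h1a; have hx2l := hxlow a2 h2a
  have hx3l := hxlow a3 h3a; have hx4l := hxlow a4 h4a
  have hx1h := hxhigh a1 h1b; have hx2h := hxhigh a2 h2b
  have hx3h := hxhigh a3 h3b; have hx4h := hxhigh a4 h4b
  -- hypotheses for the general theory
  have hA : α * (m - a2) < p := by omega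
  have hB : α * (m - a4) < p := by omega
  have hn : α * a3 < p := by omega
  have hnAB : α * a3 ≤ α * (m - a2) + α * (m - a4) := by omega
  have htB : α * (m - a2) + α * (m - a4) + 1 - p ≤ α * (m - a4) := by omega
  have htn : α * (m - a2) + α * (m - a4) + 1 - p ≤ α * a3 := by omega
  have h0B : α * a3 - α * (m - a2) ≤ α * (m - a4) := by omega
  have hstrict : (α * a3 - α * (m - a2)) + (α * (m - a2) + α * (m - a4) + 1 - p)
      < min (α * (m - a4)) (α * a3) := by omega
  -- identify the mapped Hasse invariant with Fk
  have hmap : (HasseInv p m a2 a3 a4).map (ZMod.castHom dvd_rfl k)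
      = C ((-1 : k) ^ (α * a3)) * Fk k (α * (m - a2)) (α * (m - a4)) (α * a3) := by
    rw [HasseInv]
    rw [Polynomial.map_mul, Polynomial.map_C, Polynomial.map_sum]
    congr 1
    · rw [map_pow, map_neg, map_one]
    · rw [Fk]
      refine Finset.sum_congr rfl fun j hj => ?_
      rw [Polynomial.map_mul, Polynomial.map_C, Polynomial.map_pow, Polynomial.map_X,
        map_natCast]
  have hv : ((-1 : k) ^ (α * a3)) ≠ 0 := pow_ne_zero _ (by norm_num)
  have hseteq : {lam : k | lam ≠ 0 ∧ lam ≠ 1 ∧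
        ((HasseInv p m a2 a3 a4).map (ZMod.castHom dvd_rfl k)).IsRoot lam}
      = {x : k | x ≠ 0 ∧ x ≠ 1 ∧ (Fk k (α * (m - a2)) (α * (m - a4)) (α * a3)).IsRoot x} := by
    ext x
    simp only [Set.mem_setOf_eq, hmap, IsRoot, eval_mul, eval_C, mul_eq_zero]
    tauto
  have hmain := Fk_count (k := k) hA hB hn hnAB htB htn
    (natDegree_Fk hA hB hnAB) (Fk_ne_zero hA hB hnAB)
    (rootMult_zero_Fk hA hB h0B) (rootMult_one_Fk hA hB hn hnAB htB htn)
  rw [hseteq]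
  set NC := ({x : k | x ≠ 0 ∧ x ≠ 1 ∧
      (Fk k (α * (m - a2)) (α * (m - a4)) (α * a3)).IsRoot x}).ncard with hNC
  clear_value NC
  clear_value α
  clear hmap hseteq hv hxlow hxhigh hp hp2 hmd hm1 hsum h1a h1b h2a h2b h3a h3b h4a h4b hαdef
  clear! k
  constructor
  · have c1 : (α : ℤ) * ((m : ℤ) - a4) = ((α * m : ℕ) : ℤ) - ((α * a4 : ℕ) : ℤ) := by
      push_cast; ring
    have c2 : (α : ℤ) * (a3 : ℤ) = ((α * a3 : ℕ) : ℤ) := by push_cast; ring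
    have c3 : (α : ℤ) * ((a2 : ℤ) + a3 - m)
        = ((α * a2 : ℕ) : ℤ) + ((α * a3 : ℕ) : ℤ) - ((α * m : ℕ) : ℤ) := by push_cast; ring
    have c4 : (α : ℤ) * ((a1 : ℤ) + a3 - m)
        = ((α * a1 : ℕ) : ℤ) + ((α * a3 : ℕ) : ℤ) - ((α * m : ℕ) : ℤ) := by push_cast; ring
    rw [c1, c2, c3, c4]
    clear c1 c2 c3 c4
    omega
  · omega
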